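/- Suppose n > 500, d₁, d₂ ∈ {0,…,9} with d₁ ≠ d₂ and d₁ > 0, and ℓ₁, ℓ₂ ≥ 1 satisfy P_n = (1/9)(d₁·10^{ℓ₁+ℓ₂} − (d₁ − d₂)·10^{ℓ₂} − d₂). Then |9·a·α^n − (d₁·10^{ℓ₁} − (d₁ − d₂))·10^{ℓ₂}| < 18, and consequently |((d₁·10^{ℓ₁} − (d₁−d₂))/(9a))·α^{−n}·10^{ℓ₂} − 1| < 4/α^n. -/

import Mathlib

/-- The Padovan sequence: `P 0 = 0`, `P 1 = 1`, `P 2 = 1`, `P (n+3) = P (n+1) + P n`. -/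
def padovan : ℕ → ℕ
  | 0 => 0
  | 1 => 1
  | 2 => 1
  | n + 3 => padovan (n + 1) + padovan n

private lemma padovan_aux2 (α : ℝ) (h1 : 1.32 < α) (h2 : α < 1.33) :
    (α^2 - α) * (α^2 - 1)^2 ≤ 0.0529 * ((3*α^2 - 1) * (3*α^2 - 4)) := by
  nlinarith [sq_nonneg (α - 1.32), sq_nonneg (α - 1.33), sq_nonneg (α^2 - 1.75),
    mul_pos (sub_pos.mpr h1) (sub_pos.mpr h2), sq_nonneg α]

private lemma padovan_aux3 (x : ℝ) (h : x^2 ≤ 0.0529) : x ≤ 0.23 := by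
  nlinarith [sq_nonneg (x - 0.23)]

set_option maxHeartbeats 1600000 in
/-- If `n > 500` and `P n = (1/9)(d₁·10^(ℓ₁+ℓ₂) − (d₁−d₂)·10^ℓ₂ − d₂)` with distinct
digits `d₁ ≠ d₂`, `d₁ > 0`, `ℓ₁, ℓ₂ ≥ 1`, then
`|9·a·α^n − (d₁·10^ℓ₁ − (d₁−d₂))·10^ℓ₂| < 18` and
`|((d₁·10^ℓ₁ − (d₁−d₂))/(9a))·α^(−n)·10^ℓ₂ − 1| < 4/α^n`. -/
theorem second_linear_form_bound
    (α a : ℝ) (hα : α ^ 3 = α + 1)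
    (β γ : ℂ) (hβ : β ^ 3 = β + 1) (hβim : β.im ≠ 0) (hγ : γ = starRingEnd ℂ β)
    (ha : (a : ℂ) = ((α : ℂ) + 1) / (((α : ℂ) - β) * ((α : ℂ) - γ)))
    (n d₁ d₂ ℓ₁ ℓ₂ : ℕ) (hn : 500 < n)
    (hd₁ : d₁ ≤ 9) (hd₂ : d₂ ≤ 9) (hne : d₁ ≠ d₂) (hd₁pos : 0 < d₁)
    (hℓ₁ : 1 ≤ ℓ₁) (hℓ₂ : 1 ≤ ℓ₂)
    (heq : (9 : ℤ) * (padovan n : ℤ) =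
      (d₁ : ℤ) * 10 ^ (ℓ₁ + ℓ₂) - ((d₁ : ℤ) - (d₂ : ℤ)) * 10 ^ ℓ₂ - (d₂ : ℤ)) :
    |9 * a * α ^ n - ((d₁ : ℝ) * 10 ^ ℓ₁ - ((d₁ : ℝ) - (d₂ : ℝ))) * 10 ^ ℓ₂| < 18 ∧
      |((d₁ : ℝ) * 10 ^ ℓ₁ - ((d₁ : ℝ) - (d₂ : ℝ))) / (9 * a) * α ^ (-(n : ℤ)) *
          10 ^ ℓ₂ - 1| < 4 / α ^ n := by
  -- numeric bounds on α
  have hα1 : 1.32 < α := by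
    nlinarith [sq_nonneg α, sq_nonneg (α-1.32), sq_nonneg (α-1.33), sq_nonneg (α+1)]
  have hα2 : α < 1.33 := by
    nlinarith [sq_nonneg α, sq_nonneg (α-1.32), sq_nonneg (α-1.33), sq_nonneg (α+1)]
  have hαpos : (0:ℝ) < α := by linarith
  have hsqlo : 1.7424 < α^2 := by nlinarith
  have hsqhi : α^2 < 1.7689 := by nlinarith
  -- complex algebra
  have hαc : (α : ℂ) ^ 3 = (α : ℂ) + 1 := by
    have h : ((α ^ 3 : ℝ) : ℂ) = ((α + 1 : ℝ) : ℂ) := by rw [hα]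
    push_cast at h; exact h
  have hγc : γ ^ 3 = γ + 1 := by rw [hγ, ← map_pow, hβ]; simp
  have hαβ : (α : ℂ) ≠ β := fun h => hβim (by rw [← h]; simp)
  have hαγ : (α : ℂ) ≠ γ := fun h => hβim (by
    have := congrArg Complex.im h
    simp [hγ] at this
    linarith)
  have hβγ : β ≠ γ := fun h => hβim (by
    have := congrArg Complex.im h
    simp [hγ] at this
    linarith)
  have qαβ : (α:ℂ)^2 + α*β + β^2 = 1 := by
    apply mul_left_cancel₀ (sub_ne_zero.mpr hαβ)
    linear_combination hαc - hβ
  have qαγ : (α:ℂ)^2 + α*γ + γ^2 = 1 := by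
    apply mul_left_cancel₀ (sub_ne_zero.mpr hαγ)
    linear_combination hαc - hγc
  have hsum : (α:ℂ) + β + γ = 0 := by
    apply mul_left_cancel₀ (sub_ne_zero.mpr hβγ)
    linear_combination qαβ - qαγ
  have hγval : γ = -(α:ℂ) - β := by linear_combination hsum
  have hprod : β * γ = (α:ℂ)^2 - 1 := by rw [hγval]; linear_combination -qαβ
  have hA : (α:ℂ) - β ≠ 0 := sub_ne_zero.mpr hαβ
  have hB : (α:ℂ) - γ ≠ 0 := sub_ne_zero.mpr hαγ
  have hC : β - γ ≠ 0 := sub_ne_zero.mpr hβγ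
  have hA' : β - (α:ℂ) ≠ 0 := fun h => hA (by linear_combination -h)
  have hB' : γ - (α:ℂ) ≠ 0 := fun h => hB (by linear_combination -h)
  have hC' : γ - β ≠ 0 := fun h => hC (by linear_combination -h)
  set b : ℂ := (β + 1) / ((β - (α:ℂ)) * (β - γ)) with hbdef
  set c : ℂ := (γ + 1) / ((γ - (α:ℂ)) * (γ - β)) with hcdef
  have h0 : (a:ℂ) + b + c = 0 := by
    rw [ha, hbdef, hcdef]; field_simp; ring
  have h1 : (a:ℂ)*α + b*β + c*γ = 1 := by
    rw [ha, hbdef, hcdef]; field_simp; ring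
  have h2 : (a:ℂ)*(α:ℂ)^2 + b*β^2 + c*γ^2 = 1 := by
    rw [ha, hbdef, hcdef]; field_simp
    linear_combination (-(((α:ℂ)-β)*((α:ℂ)-γ)*(β-γ))^2) * hsum
  -- Binet formula
  have binet : ∀ m : ℕ, (padovan m : ℂ) = (a:ℂ) * (α:ℂ)^m + b * β^m + c * γ^m := by
    intro m
    induction m using Nat.strong_induction_on with
    | _ m ih =>
      match m with
      | 0 => simpa [padovan] using h0.symm
      | 1 => simpa [padovan] using h1.symm
      | 2 => simpa [padovan] using h2.symm
      | (k+3) =>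
        have e1 := ih (k+1) (by omega)
        have e2 := ih k (by omega)
        show ((padovan (k+1) + padovan k : ℕ) : ℂ) = _
        push_cast
        rw [e1, e2]
        linear_combination (-(a:ℂ) * (α:ℂ)^k) * hαc + (-b * β^k) * hβ + (-c * γ^k) * hγc
  -- real and imaginary data of β
  have hre : 2 * β.re = -α := by
    have h : β + γ = ((-α : ℝ) : ℂ) := by push_cast; linear_combination hsum
    rw [hγ, Complex.add_conj] at h
    exact_mod_cast h
  have hnsq : Complex.normSq β = α^2 - 1 := by
    have h : (Complex.normSq β : ℂ) = (((α:ℝ)^2 - 1 : ℝ) : ℂ) := by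
      rw [← Complex.mul_conj, ← hγ]; push_cast; linear_combination hprod
    exact_mod_cast h
  have hresq : β.re^2 + β.im^2 = α^2 - 1 := by
    rw [← hnsq, Complex.normSq_apply]; ring
  -- c = conj b
  have hcconj : c = starRingEnd ℂ b := by
    rw [hbdef, hcdef, map_div₀, map_mul, map_sub, map_sub, map_add, map_one, ← hγ,
      Complex.conj_ofReal, hγ, Complex.conj_conj]
  set K : ℝ := ‖b‖ with hKdef
  set r : ℝ := ‖β‖ with hrdef
  have hK0 : 0 ≤ K := norm_nonneg b
  have hr0 : 0 ≤ r := norm_nonneg β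
  have hr2 : r^2 = α^2 - 1 := by rw [hrdef, Complex.sq_norm, hnsq]
  have hr1 : r ≤ 1 := by linarith [sq_nonneg (r - 1), hr2, hsqhi]
  -- |b|^2
  have hnum : Complex.normSq (β + 1) = α^2 - α := by
    rw [Complex.normSq_apply]
    simp only [Complex.add_re, Complex.add_im, Complex.one_re, Complex.one_im]
    linear_combination hresq + hre
  have hden1 : Complex.normSq (β - (α:ℂ)) = 3*α^2 - 1 := by
    rw [Complex.normSq_apply]
    simp only [Complex.sub_re, Complex.sub_im, Complex.ofReal_re, Complex.ofReal_im]
    linear_combination hresq - α * hre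
  have hden2 : Complex.normSq (β - γ) = 3*α^2 - 4 := by
    rw [Complex.normSq_apply, hγ]
    simp only [Complex.sub_re, Complex.sub_im, Complex.conj_re, Complex.conj_im]
    linear_combination 4 * hresq - (2 * β.re - α) * hre
  have hK2 : K^2 = (α^2 - α) / ((3*α^2 - 1) * (3*α^2 - 4)) := by
    rw [hKdef, Complex.sq_norm, hbdef, Complex.normSq_div, Complex.normSq_mul,
      hnum, hden1, hden2]
  have hd1pos : (0:ℝ) < 3*α^2 - 1 := by linarith
  have hd2pos : (0:ℝ) < 3*α^2 - 4 := by linarith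
  -- bound K * r^2 ≤ 0.23
  have hKr2 : K * r^2 ≤ 0.23 := by
    have hsq : (K * r^2)^2 ≤ 0.0529 := by
      have : K^2 * (r^2)^2 = (α^2-α)*(α^2-1)^2 / ((3*α^2-1)*(3*α^2-4)) := by
        rw [hK2, hr2]; ring
      have hle : (α^2-α)*(α^2-1)^2 / ((3*α^2-1)*(3*α^2-4)) ≤ 0.0529 := by
        rw [div_le_iff₀ (by positivity)]
        exact padovan_aux2 α hα1 hα2
      calc (K * r^2)^2 = K^2 * (r^2)^2 := by ring
        _ ≤ 0.0529 := by rw [this]; exact hle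
    exact padovan_aux3 _ hsq
  -- error bound
  have hrn : r^n ≤ r^2 := pow_le_pow_of_le_one hr0 hr1 (by omega)
  have hEc : ‖b*β^n + c*γ^n‖ ≤ 0.46 := by
    have h1' : ‖b*β^n‖ = K * r^n := by
      rw [norm_mul, norm_pow]
    have h2' : ‖c*γ^n‖ = K * r^n := by
      rw [norm_mul, norm_pow, hcconj, hγ, Complex.norm_conj, Complex.norm_conj]
    calc ‖b*β^n + c*γ^n‖ ≤ ‖b*β^n‖ + ‖c*γ^n‖ :=
          norm_add_le _ _
      _ = K * r^n + K * r^n := by rw [h1', h2']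
      _ ≤ K * r^2 + K * r^2 := by
            have := mul_le_mul_of_nonneg_left hrn hK0
            linarith
      _ ≤ 0.46 := by linarith
  have hE : |(padovan n : ℝ) - a * α^n| ≤ 0.46 := by
    have hcast : (((padovan n : ℝ) - a * α^n : ℝ) : ℂ) = b*β^n + c*γ^n := by
      push_cast
      linear_combination binet n
    calc |(padovan n : ℝ) - a * α^n| = ‖(((padovan n : ℝ) - a * α^n : ℝ) : ℂ)‖ := by
          rw [Complex.norm_real, Real.norm_eq_abs]
      _ = ‖b*β^n + c*γ^n‖ := by rw [hcast]
      _ ≤ 0.46 := hEc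
  -- a is real-valued formula
  have hdenc : ((α:ℂ) - β) * ((α:ℂ) - γ) = 3*(α:ℂ)^2 - 1 := by
    linear_combination (-(α:ℂ)) * hsum + hprod
  have areal : a = (α + 1) / (3*α^2 - 1) := by
    have h : (a : ℂ) = (((α + 1) / (3*α^2 - 1) : ℝ) : ℂ) := by
      rw [ha, hdenc]; push_cast; ring
    exact_mod_cast h
  have ha05 : 0.5 < a := by
    rw [areal, lt_div_iff₀ hd1pos]; linarith
  -- cast the equation
  have heqR : 9 * (padovan n : ℝ) =
      (d₁:ℝ) * 10 ^ (ℓ₁ + ℓ₂) - ((d₁:ℝ) - (d₂:ℝ)) * 10 ^ ℓ₂ - (d₂:ℝ) := by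
    exact_mod_cast heq
  rw [pow_add] at heqR
  have hd₂R : (d₂:ℝ) ≤ 9 := by exact_mod_cast hd₂
  have hd₂R0 : (0:ℝ) ≤ (d₂:ℝ) := Nat.cast_nonneg d₂
  have key : 9 * a * α ^ n - ((d₁ : ℝ) * 10 ^ ℓ₁ - ((d₁ : ℝ) - (d₂ : ℝ))) * 10 ^ ℓ₂
      = 9 * (a * α^n - (padovan n : ℝ)) - (d₂:ℝ) := by
    linear_combination heqR
  have hbound : |9 * a * α ^ n - ((d₁ : ℝ) * 10 ^ ℓ₁ - ((d₁ : ℝ) - (d₂ : ℝ))) * 10 ^ ℓ₂|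
      ≤ 13.14 := by
    rw [key]
    have habs := abs_sub (9 * (a * α^n - (padovan n : ℝ))) ((d₂:ℝ))
    have h9 : |9 * (a * α^n - (padovan n : ℝ))| ≤ 4.14 := by
      rw [abs_mul, abs_sub_comm]
      rw [abs_of_nonneg (by norm_num : (0:ℝ) ≤ 9)]
      linarith [hE]
    have hd2abs : |(d₂:ℝ)| ≤ 9 := by rw [abs_of_nonneg hd₂R0]; exact hd₂R
    calc |9 * (a * α^n - (padovan n : ℝ)) - (d₂:ℝ)|
        ≤ |9 * (a * α^n - (padovan n : ℝ))| + |(d₂:ℝ)| := abs_sub _ _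
      _ ≤ 13.14 := by linarith
  constructor
  · linarith [hbound]
  · -- second part
    have hαn : (0:ℝ) < α ^ n := pow_pos hαpos n
    have hzpow : α ^ (-(n:ℤ)) = (α ^ n)⁻¹ := by
      rw [zpow_neg, zpow_natCast]
    rw [hzpow]
    have hane : a ≠ 0 := by linarith
    have hrw : ((d₁ : ℝ) * 10 ^ ℓ₁ - ((d₁ : ℝ) - (d₂ : ℝ))) / (9 * a) * (α ^ n)⁻¹ *
          10 ^ ℓ₂ - 1
        = (((d₁ : ℝ) * 10 ^ ℓ₁ - ((d₁ : ℝ) - (d₂ : ℝ))) * 10 ^ ℓ₂ - 9 * a * α ^ n)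
          / (9 * a * α ^ n) := by
      field_simp
      try ring
    rw [hrw, abs_div, abs_of_pos (by positivity : (0:ℝ) < 9 * a * α ^ n),
      div_lt_div_iff₀ (by positivity) hαn]
    have hnum : |((d₁ : ℝ) * 10 ^ ℓ₁ - ((d₁ : ℝ) - (d₂ : ℝ))) * 10 ^ ℓ₂ - 9 * a * α ^ n|
        ≤ 13.14 := by
      rw [abs_sub_comm]; exact hbound
    have h36 : |((d₁ : ℝ) * 10 ^ ℓ₁ - ((d₁ : ℝ) - (d₂ : ℝ))) * 10 ^ ℓ₂ - 9 * a * α ^ n|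
        < 36 * a := by linarith
    calc |((d₁ : ℝ) * 10 ^ ℓ₁ - ((d₁ : ℝ) - (d₂ : ℝ))) * 10 ^ ℓ₂ - 9 * a * α ^ n| * α ^ n
        < 36 * a * α ^ n := mul_lt_mul_of_pos_right h36 hαn
      _ = 4 * (9 * a * α ^ n) := by ring
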